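/- arXiv:2102.12732 — 2 statements merged into one kernel-verified Lean document; each statement's English description precedes it below -/
import Mathlib

section
/- Let a, b, L > 0. If u : [0,L] → ℝ and y : [-L,0] → ℝ satisfy u'' = 0 on (0,L), y'''' = 0 on (-L,0), with boundary conditions u(L) = 0, y(-L) = 0, y'(-L) = 0, y''(0) = 0, and transmission conditions u(0) = y(0) and a·u'(0) = -b·y'''(0), then u ≡ 0 and y ≡ 0. -/
open MeasureTheory Set

lemma aux_const {f : ℝ → ℝ} {c d : ℝ} (hf : Differentiable ℝ f)
    (h : ∀ x ∈ Set.Icc c d, deriv f x = 0) :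
    ∀ x ∈ Set.Icc c d, f x = f c := by
  intro x hx
  refine constant_of_has_deriv_right_zero hf.continuous.continuousOn ?_ x hx
  intro z hz
  have hz' : deriv f z = 0 := h z ⟨hz.1, hz.2.le⟩
  have := (hf z).hasDerivAt
  rw [hz'] at this
  exact this.hasDerivWithinAt

lemma aux_eq {f g : ℝ → ℝ} {c d x0 : ℝ} (hx0 : x0 ∈ Set.Icc c d)
    (hf : Differentiable ℝ f) (hg : Differentiable ℝ g)
    (h : ∀ x ∈ Set.Icc c d, deriv f x = deriv g x) (h0 : f x0 = g x0) :
    ∀ x ∈ Set.Icc c d, f x = g x := by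
  have key : ∀ x ∈ Set.Icc c d, f x - g x = f c - g c := by
    refine aux_const (hf.sub hg) ?_
    intro x hx
    rw [deriv_fun_sub (hf x) (hg x), h x hx, sub_self]
  intro x hx
  have h1 := key x hx
  have h2 := key x0 hx0
  have : f x0 - g x0 = 0 := by rw [h0]; ring
  linarith

theorem stmt11 (a b L : ℝ) (ha : 0 < a) (hb : 0 < b) (hL : 0 < L)
    (u y : ℝ → ℝ) (hu : ContDiff ℝ 2 u) (hy : ContDiff ℝ 4 y)
    (huxx : ∀ x ∈ Set.Ioo (0:ℝ) L, iteratedDeriv 2 u x = 0)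
    (hyxxxx : ∀ x ∈ Set.Ioo (-L) (0:ℝ), iteratedDeriv 4 y x = 0)
    (hbc1 : u L = 0) (hbc2 : y (-L) = 0) (hbc3 : deriv y (-L) = 0)
    (hbc4 : iteratedDeriv 2 y 0 = 0)
    (htr1 : u 0 = y 0) (htr2 : a * deriv u 0 = -b * iteratedDeriv 3 y 0) :
    (∀ x ∈ Set.Icc (0:ℝ) L, u x = 0) ∧ (∀ x ∈ Set.Icc (-L) (0:ℝ), y x = 0) := by
  set c1 := deriv u 0 with hc1
  set c3 := iteratedDeriv 3 y 0 with hc3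
  -- differentiability facts
  have hu0 : Differentiable ℝ u := hu.differentiable (by norm_num)
  have hu1 : Differentiable ℝ (deriv u) := by
    have := hu.differentiable_iteratedDeriv 1 (by norm_num)
    simpa [iteratedDeriv_one] using this
  have hy0 : Differentiable ℝ y := hy.differentiable (by norm_num)
  have hy1 : Differentiable ℝ (deriv y) := by
    have := hy.differentiable_iteratedDeriv 1 (by norm_num)
    simpa [iteratedDeriv_one] using this
  have hy2 : Differentiable ℝ (iteratedDeriv 2 y) := hy.differentiable_iteratedDeriv 2 (by norm_num)
  have hy3 : Differentiable ℝ (iteratedDeriv 3 y) := hy.differentiable_iteratedDeriv 3 (by norm_num)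
  -- second derivative of u vanishes on the closed interval
  have huxx' : ∀ x ∈ Set.Icc (0:ℝ) L, deriv (deriv u) x = 0 := by
    have hcont : Continuous (iteratedDeriv 2 u) := hu.continuous_iteratedDeriv 2 (by norm_num)
    have heq : Set.EqOn (iteratedDeriv 2 u) (fun _ => (0:ℝ)) (Set.Ioo (0:ℝ) L) := huxx
    have hcl := heq.closure hcont continuous_const
    rw [closure_Ioo hL.ne] at hcl
    intro x hx
    have := hcl hx
    simpa [iteratedDeriv_succ, iteratedDeriv_one] using this
  -- fourth derivative of y vanishes on the closed interval
  have hyxxxx' : ∀ x ∈ Set.Icc (-L) (0:ℝ), deriv (iteratedDeriv 3 y) x = 0 := by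
    have hcont : Continuous (iteratedDeriv 4 y) := hy.continuous_iteratedDeriv 4 (by norm_num)
    have heq : Set.EqOn (iteratedDeriv 4 y) (fun _ => (0:ℝ)) (Set.Ioo (-L) (0:ℝ)) := hyxxxx
    have hcl := heq.closure hcont continuous_const
    rw [closure_Ioo (by linarith : -L ≠ 0)] at hcl
    intro x hx
    have := hcl hx
    simpa [iteratedDeriv_succ] using this
  have h0L : (0:ℝ) ∈ Set.Icc (0:ℝ) L := ⟨le_rfl, hL.le⟩
  have h0I : (0:ℝ) ∈ Set.Icc (-L) (0:ℝ) := ⟨by linarith, le_rfl⟩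
  have hLI : (-L) ∈ Set.Icc (-L) (0:ℝ) := ⟨le_rfl, by linarith⟩
  -- u' is constant c1 on [0, L]
  have hu' : ∀ x ∈ Set.Icc (0:ℝ) L, deriv u x = c1 := by
    have := aux_eq h0L hu1 (differentiable_const c1)
      (fun x hx => by rw [huxx' x hx, deriv_const]) rfl
    simpa using this
  -- u x = u 0 + c1 * x on [0, L]
  have huval : ∀ x ∈ Set.Icc (0:ℝ) L, u x = u 0 + c1 * x := by
    have hg : Differentiable ℝ (fun x : ℝ => u 0 + c1 * x) := by fun_prop
    have hgd : ∀ x : ℝ, deriv (fun x : ℝ => u 0 + c1 * x) x = c1 := by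
      intro x
      have : HasDerivAt (fun x : ℝ => u 0 + c1 * x) c1 x := by
        simpa using ((hasDerivAt_id x).const_mul c1).const_add (u 0)
      exact this.deriv
    have := aux_eq h0L hu0 hg
      (fun x hx => by rw [hu' x hx, hgd x]) (by simp)
    exact this
  -- y''' is constant c3 on [-L, 0]
  have hy3' : ∀ x ∈ Set.Icc (-L) (0:ℝ), iteratedDeriv 3 y x = c3 := by
    have := aux_eq h0I hy3 (differentiable_const c3)
      (fun x hx => by rw [hyxxxx' x hx, deriv_const]) rfl
    simpa using this
  -- y'' x = c3 * x on [-L, 0]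
  have hy2' : ∀ x ∈ Set.Icc (-L) (0:ℝ), iteratedDeriv 2 y x = c3 * x := by
    have hg : Differentiable ℝ (fun x : ℝ => c3 * x) := by fun_prop
    have hgd : ∀ x : ℝ, deriv (fun x : ℝ => c3 * x) x = c3 := by
      intro x
      exact ((hasDerivAt_id x).const_mul c3).deriv.trans (by ring)
    have hder : ∀ x ∈ Set.Icc (-L) (0:ℝ),
        deriv (iteratedDeriv 2 y) x = deriv (fun x : ℝ => c3 * x) x := by
      intro x hx
      rw [hgd x]
      have h3 := hy3' x hx
      rw [iteratedDeriv_succ] at h3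
      exact h3
    have := aux_eq h0I hy2 hg hder (by simpa using hbc4)
    exact this
  -- y' x = c3 * (x^2 - L^2) / 2 on [-L, 0]
  have hy1' : ∀ x ∈ Set.Icc (-L) (0:ℝ), deriv y x = c3 * (x ^ 2 - L ^ 2) / 2 := by
    have hg : Differentiable ℝ (fun x : ℝ => c3 * (x ^ 2 - L ^ 2) / 2) := by fun_prop
    have hgd : ∀ x : ℝ, deriv (fun x : ℝ => c3 * (x ^ 2 - L ^ 2) / 2) x = c3 * x := by
      intro x
      have : HasDerivAt (fun x : ℝ => c3 * (x ^ 2 - L ^ 2) / 2) (c3 * x) x := by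
        have h1 : HasDerivAt (fun x : ℝ => x ^ 2) (2 * x) x := by
          simpa using hasDerivAt_pow 2 x
        have h2 := ((h1.sub_const (L ^ 2)).const_mul c3).div_const 2
        rw [show c3 * x = c3 * (2 * x) / 2 by ring]
        exact h2
      exact this.deriv
    have hder : ∀ x ∈ Set.Icc (-L) (0:ℝ),
        deriv (deriv y) x = deriv (fun x : ℝ => c3 * (x ^ 2 - L ^ 2) / 2) x := by
      intro x hx
      rw [hgd x]
      have h2 := hy2' x hx
      rw [show (2:ℕ) = 1 + 1 from rfl, iteratedDeriv_succ, iteratedDeriv_one] at h2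
      exact h2
    have h0' : deriv y (-L) = c3 * ((-L) ^ 2 - L ^ 2) / 2 := by
      rw [hbc3]; ring
    exact aux_eq hLI hy1 hg hder h0'
  -- y x = c3 * (x^3/6 - L^2*x/2 - L^3/3) on [-L, 0]
  have hyval : ∀ x ∈ Set.Icc (-L) (0:ℝ),
      y x = c3 * (x ^ 3 / 6 - L ^ 2 * x / 2 - L ^ 3 / 3) := by
    have hg : Differentiable ℝ (fun x : ℝ => c3 * (x ^ 3 / 6 - L ^ 2 * x / 2 - L ^ 3 / 3)) := by
      fun_prop
    have hgd : ∀ x : ℝ, deriv (fun x : ℝ => c3 * (x ^ 3 / 6 - L ^ 2 * x / 2 - L ^ 3 / 3)) x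
        = c3 * (x ^ 2 - L ^ 2) / 2 := by
      intro x
      have h1 : HasDerivAt (fun x : ℝ => x ^ 3) (3 * x ^ 2) x := by
        simpa using hasDerivAt_pow 3 x
      have h2 : HasDerivAt (fun x : ℝ => x ^ 3 / 6 - L ^ 2 * x / 2 - L ^ 3 / 3)
          (3 * x ^ 2 / 6 - L ^ 2 / 2) x := by
        have ha' := h1.div_const 6
        have hb' : HasDerivAt (fun x : ℝ => L ^ 2 * x / 2) (L ^ 2 / 2) x := by
          have := ((hasDerivAt_id x).const_mul (L ^ 2)).div_const 2
          simpa using this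
        simpa using (ha'.sub hb').sub_const (L ^ 3 / 3)
      have h3 := h2.const_mul c3
      have : HasDerivAt (fun x : ℝ => c3 * (x ^ 3 / 6 - L ^ 2 * x / 2 - L ^ 3 / 3))
          (c3 * (x ^ 2 - L ^ 2) / 2) x := by
        rw [show c3 * (x ^ 2 - L ^ 2) / 2 = c3 * (3 * x ^ 2 / 6 - L ^ 2 / 2) by ring]
        exact h3
      exact this.deriv
    have hder : ∀ x ∈ Set.Icc (-L) (0:ℝ),
        deriv y x = deriv (fun x : ℝ => c3 * (x ^ 3 / 6 - L ^ 2 * x / 2 - L ^ 3 / 3)) x := by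
      intro x hx
      rw [hgd x]
      exact hy1' x hx
    have h0' : y (-L) = c3 * ((-L) ^ 3 / 6 - L ^ 2 * (-L) / 2 - L ^ 3 / 3) := by
      rw [hbc2]; ring
    exact aux_eq hLI hy0 hg hder h0'
  -- now the algebra
  have hy00 : y 0 = c3 * (-(L ^ 3) / 3) := by
    have := hyval 0 h0I
    rw [this]; ring
  have hu00 : u 0 = -(c3 * L ^ 3) / 3 := by rw [htr1, hy00]; ring
  have heq1 : u 0 + c1 * L = 0 := by
    have := huval L ⟨hL.le, le_rfl⟩
    rw [← this, hbc1]
  have heq2 : a * c1 = -b * c3 := htr2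
  have hc3zero : c3 = 0 := by
    have hkey : c3 * (a * L ^ 2 / 3 + b) = 0 := by nlinarith [heq1, heq2, hu00]
    have hpos : a * L ^ 2 / 3 + b > 0 := by positivity
    exact by
      rcases mul_eq_zero.mp hkey with h | h
      · exact h
      · linarith
  have hc1zero : c1 = 0 := by
    have : a * c1 = 0 := by rw [heq2, hc3zero]; ring
    have := mul_eq_zero.mp this
    rcases this with h | h
    · exact absurd h ha.ne'
    · exact h
  have hu0zero : u 0 = 0 := by rw [hu00, hc3zero]; ring
  constructor
  · intro x hx
    rw [huval x hx, hu0zero, hc1zero]; ring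
  · intro x hx
    rw [hyval x hx, hc3zero]; ring
end

section
/- Let b, L > 0 and λ ∈ ℝ. If y : [-L,0] → ℂ is a C⁴ function satisfying λ²y - b·y'''' = 0 on (-L,0) together with y(0) = y''(0) = y'''(0) = 0 and y(-L) = y'(-L) = 0, then y ≡ 0. -/
open MeasureTheory Set

private lemma hasDerivAt_reMulConj {f g : ℝ → ℂ} {f' g' : ℂ} {x : ℝ}
    (hf : HasDerivAt f f' x) (hg : HasDerivAt g g' x) :
    HasDerivAt (fun t => (f t * (starRingEnd ℂ) (g t)).re)
      ((f' * (starRingEnd ℂ) (g x)).re + (f x * (starRingEnd ℂ) g').re) x := by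
  have h1 := hf.mul hg.star
  have h3 : HasDerivAt (fun t => (f t * (starRingEnd ℂ) (g t)).re)
      (Complex.reCLM (f' * (starRingEnd ℂ) (g x) + f x * (starRingEnd ℂ) g')) x :=
    Complex.reCLM.hasFDerivAt.comp_hasDerivAt x h1
  simpa using h3

private lemma remc (z w : ℂ) : (z * (starRingEnd ℂ) w).re = z.re * w.re + z.im * w.im := by
  simp [Complex.mul_re]

private lemma reSelfConj (z : ℂ) : (z * (starRingEnd ℂ) z).re = Complex.normSq z := by
  rw [Complex.mul_conj]; simp

theorem stmt12 (b L lam : ℝ) (hb : 0 < b) (hL : 0 < L)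
    (y : ℝ → ℂ) (hy : ContDiff ℝ 4 y)
    (hode : ∀ x ∈ Set.Ioo (-L) (0:ℝ),
      (lam : ℂ)^2 * y x - (b : ℂ) * iteratedDeriv 4 y x = 0)
    (hbc0 : y 0 = 0) (hbc1 : iteratedDeriv 2 y 0 = 0) (hbc2 : iteratedDeriv 3 y 0 = 0)
    (hbc3 : y (-L) = 0) (hbc4 : deriv y (-L) = 0) :
    ∀ x ∈ Set.Icc (-L) (0:ℝ), y x = 0 := by
  have hL0 : (-L : ℝ) < 0 := neg_neg_iff_pos.mpr hL
  -- derivatives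
  have hdiff : ∀ n : ℕ, n ≤ 3 → ∀ x : ℝ, HasDerivAt (deriv^[n] y) (deriv^[n+1] y x) x := by
    intro n hn x
    have hle : ((1 + n : ℕ) : WithTop ℕ∞) ≤ 4 := by
      exact_mod_cast Nat.cast_le.mpr (by omega : (1 + n : ℕ) ≤ 4)
    have hc : ContDiff ℝ 1 (deriv^[n] y) := (hy.of_le hle).iterate_deriv' 1 n
    have hd := (hc.differentiable one_ne_zero x).hasDerivAt
    rw [Function.iterate_succ_apply']
    exact hd
  have hd0 := hdiff 0 (by norm_num)
  have hd1 := hdiff 1 (by norm_num)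
  have hd2 := hdiff 2 (by norm_num)
  have hd3 := hdiff 3 (by norm_num)
  simp only [Function.iterate_zero_apply] at hd0
  -- boundary conditions in iterate form
  have hb1 : deriv^[1] y (-L) = 0 := by simpa using hbc4
  have hb2 : deriv^[2] y 0 = 0 := by rw [← iteratedDeriv_eq_iterate]; exact hbc1
  have hb3 : deriv^[3] y 0 = 0 := by rw [← iteratedDeriv_eq_iterate]; exact hbc2
  -- ODE in component form
  have hodec : ∀ x ∈ Set.Ioo (-L) (0:ℝ),
      b * (deriv^[4] y x).re = lam ^ 2 * (y x).re ∧
      b * (deriv^[4] y x).im = lam ^ 2 * (y x).im := by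
    intro x hx
    have h := hode x hx
    rw [iteratedDeriv_eq_iterate, sub_eq_zero] at h
    have h' : ((lam ^ 2 : ℝ) : ℂ) * y x = ((b : ℝ) : ℂ) * deriv^[4] y x := by
      push_cast; exact h
    have hre := congrArg Complex.re h'
    have him := congrArg Complex.im h'
    simp only [Complex.re_ofReal_mul, Complex.im_ofReal_mul] at hre him
    exact ⟨hre.symm, him.symm⟩
  -- first energy g
  set g : ℝ → ℝ := fun x => lam ^ 2 / 2 * (y x * (starRingEnd ℂ) (y x)).re
      + b / 2 * (deriv^[2] y x * (starRingEnd ℂ) (deriv^[2] y x)).re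
      - b * (deriv^[3] y x * (starRingEnd ℂ) (deriv^[1] y x)).re with hgdef
  have hg' : ∀ x : ℝ, HasDerivAt g
      (lam ^ 2 / 2 * ((deriv^[1] y x * (starRingEnd ℂ) (y x)).re
          + (y x * (starRingEnd ℂ) (deriv^[1] y x)).re)
        + b / 2 * ((deriv^[3] y x * (starRingEnd ℂ) (deriv^[2] y x)).re
          + (deriv^[2] y x * (starRingEnd ℂ) (deriv^[3] y x)).re)
        - b * ((deriv^[4] y x * (starRingEnd ℂ) (deriv^[1] y x)).re
          + (deriv^[3] y x * (starRingEnd ℂ) (deriv^[2] y x)).re)) x := by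
    intro x
    exact (((hasDerivAt_reMulConj (hd0 x) (hd0 x)).const_mul (lam ^ 2 / 2)).add
      ((hasDerivAt_reMulConj (hd2 x) (hd2 x)).const_mul (b / 2))).sub
      ((hasDerivAt_reMulConj (hd3 x) (hd1 x)).const_mul b)
  have hgderiv0 : ∀ x ∈ Set.Ioo (-L) (0:ℝ), deriv g x = 0 := by
    intro x hx
    rw [(hg' x).deriv]
    obtain ⟨hre, him⟩ := hodec x hx
    simp only [remc]
    linear_combination (-1) * (deriv^[1] y x).re * hre + (-1) * (deriv^[1] y x).im * him
  have hgzero : ∀ x ∈ Set.Icc (-L) (0:ℝ), g x = 0 := by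
    have hgcont : Continuous g := Differentiable.continuous (fun x => (hg' x).differentiableAt)
    have hgdiff : DifferentiableOn ℝ g (interior (Set.Icc (-L) (0:ℝ))) :=
      fun x _ => ((hg' x).differentiableAt).differentiableWithinAt
    have hmono : MonotoneOn g (Set.Icc (-L) (0:ℝ)) := by
      apply monotoneOn_of_deriv_nonneg (convex_Icc _ _) hgcont.continuousOn hgdiff
      intro x hx
      rw [interior_Icc] at hx
      rw [hgderiv0 x hx]
    have hanti : AntitoneOn g (Set.Icc (-L) (0:ℝ)) := by
      apply antitoneOn_of_deriv_nonpos (convex_Icc _ _) hgcont.continuousOn hgdiff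
      intro x hx
      rw [interior_Icc] at hx
      rw [hgderiv0 x hx]
    have hg0 : g 0 = 0 := by
      simp only [hgdef]
      rw [hbc0, hb2, hb3]
      simp
    intro x hx
    have h0m : (0:ℝ) ∈ Set.Icc (-L) (0:ℝ) := ⟨le_of_lt hL0, le_rfl⟩
    have h1 := hmono hx h0m hx.2
    have h2 := hanti hx h0m hx.2
    rw [hg0] at h1 h2
    linarith
  -- key consequence of g = 0
  have key : ∀ x ∈ Set.Icc (-L) (0:ℝ),
      b * (deriv^[3] y x * (starRingEnd ℂ) (deriv^[1] y x)).re
        = lam ^ 2 / 2 * Complex.normSq (y x)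
          + b / 2 * Complex.normSq (deriv^[2] y x) := by
    intro x hx
    have hz := hgzero x hx
    simp only [hgdef, reSelfConj] at hz ⊢
    linarith
  -- second energy h
  set h : ℝ → ℝ := fun x =>
      b * (deriv^[2] y x * (starRingEnd ℂ) (deriv^[1] y x)).re with hhdef
  have hh' : ∀ x : ℝ, HasDerivAt h
      (b * ((deriv^[3] y x * (starRingEnd ℂ) (deriv^[1] y x)).re
        + (deriv^[2] y x * (starRingEnd ℂ) (deriv^[2] y x)).re)) x :=
    fun x => (hasDerivAt_reMulConj (hd2 x) (hd1 x)).const_mul b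
  have hhzero : ∀ x ∈ Set.Icc (-L) (0:ℝ), h x = 0 := by
    have hhcont : Continuous h := Differentiable.continuous (fun x => (hh' x).differentiableAt)
    have hhdiff : DifferentiableOn ℝ h (interior (Set.Icc (-L) (0:ℝ))) :=
      fun x _ => ((hh' x).differentiableAt).differentiableWithinAt
    have hmono : MonotoneOn h (Set.Icc (-L) (0:ℝ)) := by
      apply monotoneOn_of_deriv_nonneg (convex_Icc _ _) hhcont.continuousOn hhdiff
      intro x hx
      rw [interior_Icc] at hx
      rw [(hh' x).deriv]
      have hk := key x (Set.Ioo_subset_Icc_self hx)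
      have h1 := Complex.normSq_nonneg (y x)
      have h2 := Complex.normSq_nonneg (deriv^[2] y x)
      rw [reSelfConj]
      nlinarith [mul_nonneg (sq_nonneg lam) h1, mul_nonneg hb.le h2]
    have hhL : h (-L) = 0 := by
      simp only [hhdef]
      rw [hb1]
      simp
    have hh0 : h 0 = 0 := by
      simp only [hhdef]
      rw [hb2]
      simp
    intro x hx
    have hLm : (-L : ℝ) ∈ Set.Icc (-L) (0:ℝ) := ⟨le_rfl, le_of_lt hL0⟩
    have h0m : (0:ℝ) ∈ Set.Icc (-L) (0:ℝ) := ⟨le_of_lt hL0, le_rfl⟩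
    have h1 := hmono hLm hx hx.1
    have h2 := hmono hx h0m hx.2
    rw [hhL] at h1; rw [hh0] at h2
    linarith
  -- y'' vanishes on the open interval
  have hy2zero : ∀ x ∈ Set.Ioo (-L) (0:ℝ), deriv^[2] y x = 0 := by
    intro x hx
    have hev : h =ᶠ[nhds x] fun _ => (0:ℝ) :=
      Filter.eventuallyEq_of_mem (isOpen_Ioo.mem_nhds hx)
        (fun t ht => hhzero t (Set.Ioo_subset_Icc_self ht))
    have hdh : deriv h x = 0 := by rw [hev.deriv_eq]; simp
    rw [(hh' x).deriv] at hdh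
    have hk := key x (Set.Ioo_subset_Icc_self hx)
    rw [reSelfConj] at hdh
    have h1 := Complex.normSq_nonneg (y x)
    have h2 := Complex.normSq_nonneg (deriv^[2] y x)
    have hle : Complex.normSq (deriv^[2] y x) ≤ 0 := by
      nlinarith [mul_nonneg (sq_nonneg lam) h1]
    exact Complex.normSq_eq_zero.mp (le_antisymm hle h2)
  -- extend to the closed interval by continuity
  have hy2Icc : ∀ x ∈ Set.Icc (-L) (0:ℝ), deriv^[2] y x = 0 := by
    have hcont2 : Continuous (deriv^[2] y) :=
      Differentiable.continuous (fun x => (hd2 x).differentiableAt)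
    have heq : Set.EqOn (deriv^[2] y) (fun _ => (0:ℂ)) (Set.Ioo (-L) (0:ℝ)) :=
      fun x hx => hy2zero x hx
    have hcl := heq.closure hcont2 continuous_const
    rw [closure_Ioo (ne_of_lt hL0)] at hcl
    exact fun x hx => hcl hx
  -- integrate twice
  have hy1Icc : ∀ x ∈ Set.Icc (-L) (0:ℝ), deriv^[1] y x = 0 := by
    have hcont1 : Continuous (deriv^[1] y) :=
      Differentiable.continuous (fun x => (hd1 x).differentiableAt)
    have hc := constant_of_has_deriv_right_zero (f := deriv^[1] y) (a := -L) (b := 0)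
      hcont1.continuousOn
      (fun x hx => by
        have := hd1 x
        rw [hy2Icc x (Set.Ico_subset_Icc_self hx)] at this
        exact this.hasDerivWithinAt)
    intro x hx
    rw [hc x hx, hb1]
  intro x hx
  have hcont0 : Continuous y := hy.continuous
  have hc := constant_of_has_deriv_right_zero (f := y) (a := -L) (b := 0)
    hcont0.continuousOn
    (fun t ht => by
      have := hd0 t
      rw [show deriv^[0+1] y t = deriv^[1] y t from rfl,
        hy1Icc t (Set.Ico_subset_Icc_self ht)] at this
      exact this.hasDerivWithinAt)
  rw [hc x hx, hbc3]
end
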